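/- Let n = 2s+1 be odd, let G = G(n;k_1,...,k_n) be the unicyclic (p,q)-graph with k_i pendants at the i-th cycle vertex, and let m_1 ≥ m_2 ≥ ... ≥ m_n be the multiset {k_1,...,k_n} sorted in nonincreasing order. Then sm(G) ≥ 2q + 2 + (1/q)(m_2 + 2m_3 + ... + (n-1)m_n + n(n-1)/2). -/

import Mathlib

/-- A super edge-magic total labeling of a graph `G` with `p = Fintype.card V` vertices and
`q = G.edgeSet.ncard` edges: `fv` maps the vertices bijectively onto `{1,…,p}`, `fe` maps the
edges bijectively onto `{p+1,…,p+q}` (so together they form a bijection of `V ∪ E` onto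
`{1,…,p+q}` with `f(V) = {1,…,p}`), and every edge `uv` satisfies `f(u)+f(v)+f(uv) = c`. -/
def IsSEMT {V : Type*} [Fintype V] (G : SimpleGraph V)
    (fv : V → ℕ) (fe : Sym2 V → ℕ) (c : ℕ) : Prop :=
  Set.BijOn fv Set.univ (Set.Icc 1 (Fintype.card V)) ∧
  Set.BijOn fe G.edgeSet
    (Set.Icc (Fintype.card V + 1) (Fintype.card V + G.edgeSet.ncard)) ∧
  ∀ u v, G.Adj u v → fv u + fv v + fe s(u, v) = c

/-- The unicyclic graph `G(n; k₁, …, kₙ)`: a cycle on `Fin n` (vertex `i` adjacent to `i+1 mod n`)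
with `k i` pendant vertices attached to the cycle vertex `i`. -/
def pendantCycle (n : ℕ) (k : Fin n → ℕ) :
    SimpleGraph (Fin n ⊕ Σ i : Fin n, Fin (k i)) :=
  SimpleGraph.fromRel (fun a b =>
    (∃ i j : Fin n, a = Sum.inl i ∧ b = Sum.inl j ∧ (i.val + 1) % n = j.val) ∨
    (∃ (i : Fin n) (j : Fin (k i)), a = Sum.inr ⟨i, j⟩ ∧ b = Sum.inl i))



namespace SEMTaux


open Finset

/-! ### Prefix-sum block machinery -/

def off (b : ℕ → ℕ) (i : ℕ) : ℕ := ∑ j ∈ Finset.range i, b j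

lemma off_succ (b : ℕ → ℕ) (i : ℕ) : off b (i + 1) = off b i + b i :=
  Finset.sum_range_succ b i

lemma off_mono (b : ℕ → ℕ) {i i' : ℕ} (h : i ≤ i') : off b i ≤ off b i' :=
  Finset.sum_le_sum_of_subset (Finset.range_subset_range.2 h)

lemma add_lt_off (b : ℕ → ℕ) {i N j : ℕ} (hj : j < b i) (hN : i < N) :
    off b i + j < off b N := by
  calc off b i + j < off b (i + 1) := by rw [off_succ]; omega
  _ ≤ off b N := off_mono b hN

lemma block_surj (b : ℕ → ℕ) (N : ℕ) :
    ∀ x, x < off b N → ∃ i, i < N ∧ ∃ j, j < b i ∧ x = off b i + j := by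
  induction N with
  | zero => intro x hx; simp [off] at hx
  | succ N ih =>
    intro x hx
    rcases lt_or_ge x (off b N) with h | h
    · obtain ⟨i, hi, j, hj, hxe⟩ := ih x h
      exact ⟨i, by omega, j, hj, hxe⟩
    · rw [off_succ] at hx
      exact ⟨N, by omega, x - off b N, by omega, by omega⟩

/-! ### BijOn helpers -/

lemma bijOn_of_surjOn_mapsTo {V : Type*} [Fintype V] (f : V → ℕ) (s : Finset ℕ)
    (h1 : ∀ v, f v ∈ s) (h2 : ∀ x ∈ s, ∃ v, f v = x) (hcard : s.card = Fintype.card V) :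
    Set.BijOn f Set.univ ↑s := by
  have himg : Finset.univ.image f = s := by
    apply Finset.Subset.antisymm
    · intro x hx
      obtain ⟨v, _, rfl⟩ := Finset.mem_image.1 hx
      exact h1 v
    · intro x hx
      obtain ⟨v, hv⟩ := h2 x hx
      exact Finset.mem_image.2 ⟨v, Finset.mem_univ v, hv⟩
  have hinj : Set.InjOn f ↑(Finset.univ : Finset V) :=
    Finset.injOn_of_card_image_eq (by rw [himg, hcard, Finset.card_univ])
  refine ⟨fun v _ => h1 v, ?_, ?_⟩
  · simpa using hinj
  · intro x hx
    obtain ⟨v, hv⟩ := h2 x hx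
    exact ⟨v, Set.mem_univ v, hv⟩

lemma bijOn_comp_cancel {α β γ : Type*} {g : α → β} {f : β → γ} {A : Set β} {B : Set γ}
    (hg : Set.BijOn g Set.univ A) (h : Set.BijOn (fun a => f (g a)) Set.univ B) :
    Set.BijOn f A B := by
  refine ⟨?_, ?_, ?_⟩
  · intro b hb
    obtain ⟨a, -, rfl⟩ := hg.surjOn hb
    exact h.mapsTo (Set.mem_univ a)
  · intro b hb b' hb' hff
    obtain ⟨a, -, rfl⟩ := hg.surjOn hb
    obtain ⟨a', -, rfl⟩ := hg.surjOn hb'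
    have : a = a' := h.injOn (Set.mem_univ a) (Set.mem_univ a') hff
    rw [this]
  · intro c hc
    obtain ⟨a, -, rfl⟩ := h.surjOn hc
    exact ⟨g a, hg.mapsTo (Set.mem_univ a), rfl⟩

lemma sum_univ_of_bijOn {V : Type*} [Fintype V] {f : V → ℕ} {s : Finset ℕ}
    (h : Set.BijOn f Set.univ ↑s) : ∑ v, f v = ∑ x ∈ s, x := by
  have himg : Finset.univ.image f = s := by
    apply Finset.Subset.antisymm
    · intro x hx
      obtain ⟨v, -, rfl⟩ := Finset.mem_image.1 hx
      exact h.mapsTo (Set.mem_univ v)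
    · intro x hx
      obtain ⟨v, -, rfl⟩ := h.surjOn hx
      exact Finset.mem_image.2 ⟨v, Finset.mem_univ v, rfl⟩
  rw [← himg, Finset.sum_image (fun a _ b _ hab => h.injOn trivial trivial hab)]

/-! ### Rearrangement-type inequality -/

-- sum of a finset of positive naturals is at least 1 + 2 + ... + card
lemma sum_distinct_pos (T : Finset ℕ) (h1 : ∀ y ∈ T, 1 ≤ y) :
    ∑ j ∈ Finset.range T.card, (j + 1) ≤ ∑ y ∈ T, y := by
  induction T using Finset.strongInduction with
  | _ T ih =>
    rcases T.eq_empty_or_nonempty with rfl | hT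
    · simp
    · set M := T.max' hT with hM
      have hMem : M ∈ T := T.max'_mem hT
      have hsub : T ⊆ Finset.Icc 1 M := by
        intro y hy
        exact Finset.mem_Icc.2 ⟨h1 y hy, Finset.le_max' T y hy⟩
      have hcard : T.card ≤ M := by
        calc T.card ≤ (Finset.Icc 1 M).card := Finset.card_le_card hsub
        _ = M := by rw [Nat.card_Icc]; omega
      have herase := ih (T.erase M) (Finset.erase_ssubset hMem)
        (fun y hy => h1 y (Finset.mem_of_mem_erase hy))
      have hcard' : (T.erase M).card = T.card - 1 := Finset.card_erase_of_mem hMem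
      have hTcard : 1 ≤ T.card := Finset.card_pos.2 hT
      have hsum : ∑ y ∈ T, y = M + ∑ y ∈ T.erase M, y := (Finset.add_sum_erase T id hMem).symm
      obtain ⟨c, hc⟩ : ∃ c, T.card = c + 1 := ⟨T.card - 1, by omega⟩
      have hr : ∑ j ∈ Finset.range (c + 1), (j + 1)
          = (∑ j ∈ Finset.range c, (j + 1)) + (c + 1) := Finset.sum_range_succ _ _
      rw [hcard', hc] at herase
      simp only [Nat.add_sub_cancel] at herase
      rw [hc, hr]
      omega

lemma sum_injOn_pos {n : ℕ} (a : Fin n → ℕ) (hinj : Function.Injective a)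
    (ha : ∀ i, 1 ≤ a i) (s : Finset (Fin n)) :
    ∑ j ∈ Finset.range s.card, (j + 1) ≤ ∑ i ∈ s, a i := by
  have h1 : ∑ y ∈ s.image a, y = ∑ i ∈ s, a i :=
    Finset.sum_image (fun x _ y _ h => hinj h)
  have h2 : (s.image a).card = s.card := Finset.card_image_of_injective s hinj
  rw [← h1, ← h2]
  exact sum_distinct_pos _ (fun y hy => by
    obtain ⟨i, -, rfl⟩ := Finset.mem_image.1 hy; exact ha i)

-- a "lower" subset of Fin n
lemma sum_lower_set {n : ℕ} (s : Finset (Fin n))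
    (hlow : ∀ i j : Fin n, i ≤ j → j ∈ s → i ∈ s) :
    ∑ i ∈ s, (i.val + 1) = ∑ j ∈ Finset.range s.card, (j + 1) := by
  have hmem : ∀ i : Fin n, i ∈ s ↔ i.val < s.card := by
    intro i
    constructor
    · intro hi
      have hsub : Finset.Iic i ⊆ s := fun j hj => hlow j i (Finset.mem_Iic.1 hj) hi
      have hcard := Finset.card_le_card hsub
      rw [Fin.card_Iic] at hcard
      omega
    · intro hi
      by_contra hns
      have hsub : s ⊆ Finset.Iio i := by
        intro j hj
        rw [Finset.mem_Iio]
        by_contra hle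
        exact hns (hlow i j (not_lt.1 hle) hj)
      have hcard := Finset.card_le_card hsub
      rw [Fin.card_Iio] at hcard
      omega
  -- now a bijection i ↦ i.val between s and range s.card
  rcases Nat.eq_zero_or_pos n with rfl | hn
  · have : s = ∅ := Finset.eq_empty_of_isEmpty s
    simp [this]
  refine Finset.sum_nbij' (fun i => i.val) (fun j => ⟨j % n, Nat.mod_lt _ hn⟩) ?_ ?_ ?_ ?_ ?_
  · intro i hi; rw [Finset.mem_range]; exact (hmem i).1 hi
  · intro j hj
    rw [Finset.mem_range] at hj
    have hcardn : s.card ≤ n := by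
      simpa using Finset.card_le_card (Finset.subset_univ s)
    have hjn : j < n := by omega
    rw [hmem]; simp [Nat.mod_eq_of_lt hjn]; omega
  · intro i hi; simp [Fin.ext_iff, Nat.mod_eq_of_lt i.isLt]
  · intro j hj
    rw [Finset.mem_range] at hj
    have hcardn : s.card ≤ n := by simpa using Finset.card_le_card (Finset.subset_univ s)
    simp [Nat.mod_eq_of_lt (by omega : j < n)]
  · intro i hi; rfl

-- layer-cake decomposition
lemma layer {n : ℕ} (w x : Fin n → ℕ) (M : ℕ) (hM : ∀ i, w i ≤ M) :
    ∑ i, w i * x i = ∑ t ∈ Finset.range M, ∑ i ∈ Finset.univ.filter (fun i => t < w i), x i := by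
  have h1 : ∀ t, ∑ i ∈ Finset.univ.filter (fun i => t < w i), x i
      = ∑ i : Fin n, if t < w i then x i else 0 := fun t => Finset.sum_filter _ _
  simp only [h1]
  rw [Finset.sum_comm]
  congr 1
  funext i
  rw [← Finset.sum_filter]
  have : (Finset.range M).filter (fun t => t < w i) = Finset.range (w i) := by
    ext t
    simp only [Finset.mem_filter, Finset.mem_range]
    exact ⟨fun h => h.2, fun h => ⟨lt_of_lt_of_le h (hM i), h⟩⟩
  rw [this, Finset.sum_const, Finset.card_range, smul_eq_mul, mul_comm]

lemma filter_card_eq_of_map_eq {n : ℕ} {w w' : Fin n → ℕ}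
    (hmult : Finset.univ.val.map w' = Finset.univ.val.map w) (t : ℕ) :
    (Finset.univ.filter (fun i => t < w' i)).card
      = (Finset.univ.filter (fun i => t < w i)).card := by
  have h := congrArg (Multiset.countP (fun y => t < y)) hmult
  rwa [Multiset.countP_map, Multiset.countP_map] at h

-- the key rearrangement inequality
lemma key_ineq {n : ℕ} (w w' : Fin n → ℕ)
    (hmult : Finset.univ.val.map w' = Finset.univ.val.map w)
    (hanti : ∀ i j : Fin n, i ≤ j → w' j ≤ w' i)
    (a : Fin n → ℕ) (hinj : Function.Injective a) (ha : ∀ i, 1 ≤ a i) :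
    ∑ i, w' i * (i.val + 1) ≤ ∑ i, w i * a i := by
  set M := (∑ i, w i) + 1 with hM
  have hbw : ∀ i, w i ≤ M := by
    intro i
    have : w i ≤ ∑ i, w i := Finset.single_le_sum (fun j _ => Nat.zero_le (w j)) (Finset.mem_univ i)
    omega
  have hsum_eq : ∑ i, w' i = ∑ i, w i := by
    have := congrArg Multiset.sum hmult
    simpa [Finset.sum] using this
  have hbw' : ∀ i, w' i ≤ M := by
    intro i
    have : w' i ≤ ∑ i, w' i := Finset.single_le_sum (fun j _ => Nat.zero_le (w' j)) (Finset.mem_univ i)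
    omega
  rw [layer w a M hbw, layer w' (fun i => i.val + 1) M hbw']
  apply Finset.sum_le_sum
  intro t _
  have hlow : ∀ i j : Fin n, i ≤ j → j ∈ Finset.univ.filter (fun i => t < w' i) →
      i ∈ Finset.univ.filter (fun i => t < w' i) := by
    intro i j hij hj
    simp only [Finset.mem_filter, Finset.mem_univ, true_and] at *
    exact lt_of_lt_of_le hj (hanti i j hij)
  rw [sum_lower_set _ hlow, filter_card_eq_of_map_eq hmult t]
  exact sum_injOn_pos a hinj ha _


variable (n : ℕ) (k : Fin n → ℕ)


def kk (j : ℕ) : ℕ := if h : j < n then k ⟨j, h⟩ else 0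
def aS (j : ℕ) : ℕ := if j % 2 = 0 then 1 else kk n k j
def bS (j : ℕ) : ℕ := if j % 2 = 0 then kk n k j else 1
def rS (j : ℕ) : ℕ := kk n k j + 1
def AA : ℕ := off (aS n k) n
def PP : ℕ := off (rS n k) n

lemma kk_coe (i : Fin n) : kk n k i.val = k i := by
  simp [kk, i.isLt]

lemma off_ab (i : ℕ) : off (aS n k) i + off (bS n k) i = off (rS n k) i := by
  rw [off, off, off, ← Finset.sum_add_distrib]
  refine Finset.sum_congr rfl fun j _ => ?_
  rcases Nat.mod_two_eq_zero_or_one j with h | h <;> simp [aS, bS, rS, h] <;> omega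

lemma AA_add : AA n k + off (bS n k) n = PP n k := off_ab n k n

lemma sum_kk : ∑ j ∈ Finset.range n, kk n k j = ∑ i, k i := by
  rw [← Fin.sum_univ_eq_sum_range (fun j => kk n k j) n]
  exact Finset.sum_congr rfl fun i _ => kk_coe n k i

lemma PP_eq : PP n k = n + ∑ i, k i := by
  have h : PP n k = ∑ j ∈ Finset.range n, (kk n k j + 1) := rfl
  rw [h, Finset.sum_add_distrib, Finset.sum_const, Finset.card_range, sum_kk, smul_eq_mul]
  omega

lemma card_V : Fintype.card (Fin n ⊕ Σ i : Fin n, Fin (k i)) = PP n k := by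
  rw [PP_eq]
  simp

def fv : (Fin n ⊕ Σ i : Fin n, Fin (k i)) → ℕ
  | Sum.inl i =>
      if i.val % 2 = 0 then 1 + off (aS n k) i.val else AA n k + 1 + off (bS n k) i.val
  | Sum.inr ⟨i, j⟩ =>
      if i.val % 2 = 0 then AA n k + 1 + off (bS n k) i.val + j.val
      else 1 + off (aS n k) i.val + j.val

lemma fv_mem (v : Fin n ⊕ Σ i : Fin n, Fin (k i)) :
    fv n k v ∈ Finset.Icc 1 (PP n k) := by
  have hAA : AA n k = off (aS n k) n := rfl
  have hAP := AA_add n k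
  rw [Finset.mem_Icc]
  rcases v with i | ⟨i, j⟩
  · rcases Nat.mod_two_eq_zero_or_one i.val with h | h
    · have h1 : (0:ℕ) < aS n k i.val := by simp [aS, h]
      have h2 : off (aS n k) i.val + 0 < off (aS n k) n := add_lt_off _ h1 i.isLt
      simp only [fv]; rw [if_pos h]
      omega
    · have h1 : (0:ℕ) < bS n k i.val := by simp [bS, h]
      have h2 : off (bS n k) i.val + 0 < off (bS n k) n := add_lt_off _ h1 i.isLt
      simp only [fv]; rw [if_neg (by omega : ¬ (i.val % 2 = 0))]
      omega
  · have hj : j.val < kk n k i.val := by rw [kk_coe]; exact j.isLt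
    rcases Nat.mod_two_eq_zero_or_one i.val with h | h
    · have h1 : j.val < bS n k i.val := by simpa [bS, h] using hj
      have h2 : off (bS n k) i.val + j.val < off (bS n k) n := add_lt_off _ h1 i.isLt
      simp only [fv]; rw [if_pos h]
      omega
    · have h1 : j.val < aS n k i.val := by simpa [aS, h] using hj
      have h2 : off (aS n k) i.val + j.val < off (aS n k) n := add_lt_off _ h1 i.isLt
      simp only [fv]; rw [if_neg (by omega : ¬ (i.val % 2 = 0))]
      omega

lemma fv_surj (x : ℕ) (hx : x ∈ Finset.Icc 1 (PP n k)) :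
    ∃ v, fv n k v = x := by
  have hAA : AA n k = off (aS n k) n := rfl
  have hAP := AA_add n k
  rw [Finset.mem_Icc] at hx
  rcases le_or_gt x (AA n k) with hle | hgt
  · obtain ⟨i, hi, j, hj, he⟩ := block_surj (aS n k) n (x - 1) (by omega)
    rcases Nat.mod_two_eq_zero_or_one i with h | h
    · refine ⟨Sum.inl ⟨i, hi⟩, ?_⟩
      have hj0 : j = 0 := by simp [aS, h] at hj; omega
      simp only [fv]; rw [if_pos h]
      omega
    · have hjk : j < k ⟨i, hi⟩ := by
        rw [← kk_coe n k ⟨i, hi⟩]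
        simpa [aS, h] using hj
      refine ⟨Sum.inr ⟨⟨i, hi⟩, ⟨j, hjk⟩⟩, ?_⟩
      simp only [fv]; rw [if_neg (by omega : ¬ (i % 2 = 0))]
      omega
  · obtain ⟨i, hi, j, hj, he⟩ := block_surj (bS n k) n (x - AA n k - 1) (by omega)
    rcases Nat.mod_two_eq_zero_or_one i with h | h
    · have hjk : j < k ⟨i, hi⟩ := by
        rw [← kk_coe n k ⟨i, hi⟩]
        simpa [bS, h] using hj
      refine ⟨Sum.inr ⟨⟨i, hi⟩, ⟨j, hjk⟩⟩, ?_⟩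
      simp only [fv]; rw [if_pos h]
      omega
    · refine ⟨Sum.inl ⟨i, hi⟩, ?_⟩
      have hj0 : j = 0 := by simp [bS, h] at hj; omega
      simp only [fv]; rw [if_neg (by omega : ¬ (i % 2 = 0))]
      omega

def rk : (Fin n ⊕ Σ i : Fin n, Fin (k i)) → ℕ
  | Sum.inl i => if i.val = n - 1 then 0 else 1 + off (rS n k) i.val + kk n k i.val
  | Sum.inr ⟨i, j⟩ => 1 + off (rS n k) i.val + j.val

lemma PP_pos (hn : 3 ≤ n) : 0 < PP n k := by
  have := PP_eq n k; omega

lemma rk_lt (v : Fin n ⊕ Σ i : Fin n, Fin (k i)) (hn : 3 ≤ n) : rk n k v < PP n k := by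
  rcases v with i | ⟨i, j⟩
  · rcases eq_or_ne i.val (n - 1) with h | h
    · simp only [rk, h, reduceIte]
      exact PP_pos n k hn
    · simp only [rk]; rw [if_neg h]
      have h1 : off (rS n k) (i.val + 1) = off (rS n k) i.val + (kk n k i.val + 1) :=
        off_succ _ _
      have h2 : off (rS n k) (i.val + 1) + 0 < off (rS n k) n :=
        add_lt_off _ (by simp [rS]) (by have := i.isLt; omega)
      have hPP : PP n k = off (rS n k) n := rfl
      omega
  · have hjk : j.val < kk n k i.val := by rw [kk_coe]; exact j.isLt
    have hjr : j.val + 1 < rS n k i.val := by simp [rS]; omega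
    have h2 : off (rS n k) i.val + (j.val + 1) < off (rS n k) n :=
      add_lt_off _ hjr i.isLt
    have hPP : PP n k = off (rS n k) n := rfl
    simp only [rk]
    omega

lemma rk_surj (x : ℕ) (hx : x < PP n k) (hn : 3 ≤ n) :
    ∃ v, rk n k v = x := by
  have hPP : PP n k = off (rS n k) n := rfl
  rcases Nat.eq_zero_or_pos x with rfl | hpos
  · exact ⟨Sum.inl ⟨n - 1, by omega⟩, by simp [rk]⟩
  · obtain ⟨i, hi, j, hj, he⟩ := block_surj (rS n k) n (x - 1) (by omega)
    rcases lt_or_ge j (kk n k i) with hlt | hge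
    · have hjk : j < k ⟨i, hi⟩ := by rw [← kk_coe n k ⟨i, hi⟩]; exact hlt
      exact ⟨Sum.inr ⟨⟨i, hi⟩, ⟨j, hjk⟩⟩, by simp only [rk]; omega⟩
    · have hje : j = kk n k i := by simp [rS] at hj; omega
      have hine : i ≠ n - 1 := by
        rintro rfl
        have h1 : off (rS n k) ((n-1) + 1) = off (rS n k) (n-1) + (kk n k (n-1) + 1) :=
          off_succ _ _
        have h2 : (n - 1) + 1 = n := by omega
        rw [h2] at h1
        omega
      refine ⟨Sum.inl ⟨i, hi⟩, ?_⟩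
      simp only [rk]; rw [if_neg hine]
      omega

def nxt {n : ℕ} (i : Fin n) : Fin n := ⟨(i.val + 1) % n, Nat.mod_lt _ i.pos⟩

def ee : (Fin n ⊕ Σ i : Fin n, Fin (k i)) → Sym2 (Fin n ⊕ Σ i : Fin n, Fin (k i))
  | Sum.inl i => s(Sum.inl i, Sum.inl (nxt i))
  | Sum.inr ⟨i, j⟩ => s(Sum.inr ⟨i, j⟩, Sum.inl i)

lemma off_zero (b : ℕ → ℕ) : off b 0 = 0 := by simp [off]

lemma esum_cyc (hn : 3 ≤ n) (ho : n % 2 = 1) (i : Fin n) :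
    fv n k (Sum.inl i) + fv n k (Sum.inl (nxt i)) = AA n k + 1 + rk n k (Sum.inl i) := by
  have hAA : AA n k = off (aS n k) n := rfl
  rcases eq_or_ne i.val (n - 1) with h | h
  · have hn1 : i.val + 1 = n := by have := i.isLt; omega
    have hnxt : (nxt i).val = 0 := by simp [nxt, hn1]
    have hpar : i.val % 2 = 0 := by omega
    have hsucc := off_succ (aS n k) i.val
    rw [hn1] at hsucc
    have haS : aS n k i.val = 1 := by simp [aS, hpar]
    simp only [fv, rk, hnxt]
    rw [if_pos h, if_pos hpar, if_pos trivial, off_zero]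
    omega
  · have hlt : i.val + 1 < n := by have := i.isLt; omega
    have hnxt : (nxt i).val = i.val + 1 := by simp [nxt, Nat.mod_eq_of_lt hlt]
    have hra : off (rS n k) (i.val + 1) = off (rS n k) i.val + (kk n k i.val + 1) := off_succ _ _
    have hoa : off (aS n k) (i.val + 1) = off (aS n k) i.val + aS n k i.val := off_succ _ _
    have hob : off (bS n k) (i.val + 1) = off (bS n k) i.val + bS n k i.val := off_succ _ _
    have hab := off_ab n k i.val
    simp only [fv, rk, hnxt]
    rw [if_neg h]
    rcases Nat.mod_two_eq_zero_or_one i.val with hpar | hpar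
    · rw [if_pos hpar, if_neg (by omega : ¬ ((i.val + 1) % 2 = 0))]
      have hbv : bS n k i.val = kk n k i.val := by simp [bS, hpar]
      omega
    · rw [if_neg (by omega : ¬ (i.val % 2 = 0)), if_pos (by omega : (i.val + 1) % 2 = 0)]
      have hav : aS n k i.val = kk n k i.val := by simp [aS]; omega
      omega

lemma esum_pend (i : Fin n) (j : Fin (k i)) :
    fv n k (Sum.inr ⟨i, j⟩) + fv n k (Sum.inl i) = AA n k + 1 + rk n k (Sum.inr ⟨i, j⟩) := by
  have hab := off_ab n k i.val
  simp only [fv, rk]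
  rcases Nat.mod_two_eq_zero_or_one i.val with hpar | hpar
  · rw [if_pos hpar, if_pos hpar]
    omega
  · rw [if_neg (by omega : ¬ (i.val % 2 = 0)), if_neg (by omega : ¬ (i.val % 2 = 0))]
    omega

def CC : ℕ := 2 * PP n k + AA n k + 1

def fe : Sym2 (Fin n ⊕ Σ i : Fin n, Fin (k i)) → ℕ :=
  Sym2.lift ⟨fun u v => CC n k - (fv n k u + fv n k v), fun u v => by
    dsimp only; rw [Nat.add_comm (fv n k u)]⟩

lemma fe_ee (hn : 3 ≤ n) (ho : n % 2 = 1) (v : Fin n ⊕ Σ i : Fin n, Fin (k i)) :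
    fe n k (ee n k v) = 2 * PP n k - rk n k v := by
  have hlt := rk_lt n k v hn
  rcases v with i | ⟨i, j⟩
  · have h := esum_cyc n k hn ho i
    simp only [ee, fe, Sym2.lift_mk]
    rw [h, CC]
    omega
  · have h := esum_pend n k i j
    simp only [ee, fe, Sym2.lift_mk]
    rw [h, CC]
    omega

lemma nxt_ne (hn : 3 ≤ n) (i : Fin n) : i ≠ nxt i := by
  intro h
  have hv := congrArg Fin.val h
  simp only [nxt] at hv
  rcases lt_or_ge (i.val + 1) n with hc | hc
  · rw [Nat.mod_eq_of_lt hc] at hv; omega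
  · have h1 : i.val + 1 = n := by have := i.isLt; omega
    rw [h1, Nat.mod_self] at hv
    omega

lemma adj_cyc (hn : 3 ≤ n) (i : Fin n) :
    (pendantCycle n k).Adj (Sum.inl i) (Sum.inl (nxt i)) := by
  rw [pendantCycle, SimpleGraph.fromRel_adj]
  refine ⟨fun h => nxt_ne n hn i (Sum.inl.inj h), Or.inl (Or.inl ⟨i, nxt i, rfl, rfl, rfl⟩)⟩

lemma adj_pend (i : Fin n) (j : Fin (k i)) :
    (pendantCycle n k).Adj (Sum.inr ⟨i, j⟩) (Sum.inl i) := by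
  rw [pendantCycle, SimpleGraph.fromRel_adj]
  exact ⟨by simp, Or.inl (Or.inr ⟨i, j, rfl, rfl⟩)⟩

lemma edgeSet_eq (hn : 3 ≤ n) :
    (pendantCycle n k).edgeSet = Set.range (ee n k) := by
  apply Set.Subset.antisymm
  · intro x hx
    induction x with
    | _ u v =>
      rw [SimpleGraph.mem_edgeSet, pendantCycle, SimpleGraph.fromRel_adj] at hx
      obtain ⟨-, h | h⟩ := hx
      · rcases h with ⟨i, j, rfl, rfl, hmod⟩ | ⟨i, j, rfl, rfl⟩
        · exact ⟨Sum.inl i, by simp only [ee]; rw [show nxt i = j from Fin.ext (show (nxt i).val = j.val from hmod)]⟩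
        · exact ⟨Sum.inr ⟨i, j⟩, rfl⟩
      · rcases h with ⟨i, j, rfl, rfl, hmod⟩ | ⟨i, j, rfl, rfl⟩
        · exact ⟨Sum.inl i, by simp only [ee]; rw [Sym2.eq_swap, show nxt i = j from Fin.ext (show (nxt i).val = j.val from hmod)]⟩
        · exact ⟨Sum.inr ⟨i, j⟩, by simp only [ee]; rw [Sym2.eq_swap]⟩
  · rintro x ⟨v, rfl⟩
    rcases v with i | ⟨i, j⟩
    · exact (pendantCycle n k).mem_edgeSet.2 (adj_cyc n k hn i)
    · exact (pendantCycle n k).mem_edgeSet.2 (adj_pend n k i j)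

lemma ee_inj (hn : 3 ≤ n) : Function.Injective (ee n k) := by
  intro u v h
  rcases u with i | ⟨i, j⟩ <;> rcases v with i' | ⟨i', j'⟩ <;>
    simp only [ee, Sym2.eq_iff] at h
  · rcases h with ⟨h1, -⟩ | ⟨h1, h2⟩
    · rw [h1]
    · exfalso
      have e1 : i.val = (i'.val + 1) % n := congrArg Fin.val (Sum.inl.inj h1)
      have e2 : (i.val + 1) % n = i'.val := by
        have := congrArg Fin.val (Sum.inl.inj h2)
        simpa [nxt] using this
      have hi := i.isLt
      have hi' := i'.isLt
      rcases lt_or_ge (i'.val + 1) n with c1 | c1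
      · rw [Nat.mod_eq_of_lt c1] at e1
        rcases lt_or_ge (i.val + 1) n with c2 | c2
        · rw [Nat.mod_eq_of_lt c2] at e2; omega
        · rw [show i.val + 1 = n by omega, Nat.mod_self] at e2; omega
      · rw [show i'.val + 1 = n by omega, Nat.mod_self] at e1
        rcases lt_or_ge (i.val + 1) n with c2 | c2
        · rw [Nat.mod_eq_of_lt c2] at e2; omega
        · rw [show i.val + 1 = n by omega, Nat.mod_self] at e2; omega
  · exfalso
    rcases h with ⟨h1, -⟩ | ⟨-, h1⟩ <;> exact Sum.inl_ne_inr h1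
  · exfalso
    rcases h with ⟨h1, -⟩ | ⟨h1, -⟩ <;> exact Sum.inr_ne_inl h1
  · rcases h with ⟨h1, -⟩ | ⟨h1, -⟩
    · exact h1
    · exact absurd h1 Sum.inr_ne_inl

lemma ncard_edgeSet (hn : 3 ≤ n) : (pendantCycle n k).edgeSet.ncard = PP n k := by
  rw [edgeSet_eq n k hn, ← Set.image_univ,
    Set.ncard_image_of_injective _ (ee_inj n k hn), Set.ncard_univ,
    Nat.card_eq_fintype_card, card_V]

lemma fv_bijOn : Set.BijOn (fv n k) Set.univ (Set.Icc 1 (PP n k)) := by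
  have h := bijOn_of_surjOn_mapsTo (fv n k) (Finset.Icc 1 (PP n k)) (fv_mem n k)
    (fv_surj n k) (by rw [Nat.card_Icc, card_V]; omega)
  simpa using h

lemma fe_bijOn_aux (hn : 3 ≤ n) (ho : n % 2 = 1) :
    Set.BijOn (fun v => fe n k (ee n k v)) Set.univ
      (Set.Icc (PP n k + 1) (PP n k + PP n k)) := by
  have h0 := PP_pos n k hn
  have heq : (fun v => fe n k (ee n k v)) = fun v => 2 * PP n k - rk n k v :=
    funext (fe_ee n k hn ho)
  rw [heq]
  have h := bijOn_of_surjOn_mapsTo (fun v => 2 * PP n k - rk n k v)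
    (Finset.Icc (PP n k + 1) (PP n k + PP n k))
    (fun v => by
      have := rk_lt n k v hn
      rw [Finset.mem_Icc]
      omega)
    (fun x hx => by
      rw [Finset.mem_Icc] at hx
      obtain ⟨v, hv⟩ := rk_surj n k (2 * PP n k - x) (by omega) hn
      exact ⟨v, by omega⟩)
    (by rw [Nat.card_Icc, card_V]; omega)
  simpa using h

lemma ee_bijOn (hn : 3 ≤ n) :
    Set.BijOn (ee n k) Set.univ (pendantCycle n k).edgeSet := by
  rw [edgeSet_eq n k hn, ← Set.image_univ]
  exact (Function.Injective.injOn (ee_inj n k hn)).bijOn_image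

theorem exists_semt (hn : 3 ≤ n) (ho : n % 2 = 1) :
    IsSEMT (pendantCycle n k) (fv n k) (fe n k) (CC n k) := by
  have hcard := card_V n k
  have hncard := ncard_edgeSet n k hn
  refine ⟨?_, ?_, ?_⟩
  · rw [hcard]; exact fv_bijOn n k
  · rw [hcard, hncard]
    exact bijOn_comp_cancel (ee_bijOn n k hn) (fe_bijOn_aux n k hn ho)
  · intro u v _
    have h1 := fv_mem n k u
    have h2 := fv_mem n k v
    rw [Finset.mem_Icc] at h1 h2
    have h3 : fe n k s(u, v) = CC n k - (fv n k u + fv n k v) := rfl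
    rw [h3, CC]
    omega


/-! ### Lower bound -/

lemma nxt_injective : Function.Injective (nxt (n := n)) := by
  intro i i' h
  have hv := congrArg Fin.val h
  simp only [nxt] at hv
  have hi := i.isLt
  have hi' := i'.isLt
  apply Fin.ext
  rcases lt_or_ge (i.val + 1) n with c1 | c1
  · rw [Nat.mod_eq_of_lt c1] at hv
    rcases lt_or_ge (i'.val + 1) n with c2 | c2
    · rw [Nat.mod_eq_of_lt c2] at hv; omega
    · rw [show i'.val + 1 = n by omega, Nat.mod_self] at hv; omega
  · rw [show i.val + 1 = n by omega, Nat.mod_self] at hv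
    rcases lt_or_ge (i'.val + 1) n with c2 | c2
    · rw [Nat.mod_eq_of_lt c2] at hv; omega
    · rw [show i'.val + 1 = n by omega, Nat.mod_self] at hv; omega

def esumF (Fv : (Fin n ⊕ Σ i : Fin n, Fin (k i)) → ℕ) :
    (Fin n ⊕ Σ i : Fin n, Fin (k i)) → ℕ
  | Sum.inl i => Fv (Sum.inl i) + Fv (Sum.inl (nxt i))
  | Sum.inr ⟨i, j⟩ => Fv (Sum.inr ⟨i, j⟩) + Fv (Sum.inl i)

lemma sum_esumF (Fv : (Fin n ⊕ Σ i : Fin n, Fin (k i)) → ℕ) :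
    ∑ v, esumF n k Fv v = (∑ v, Fv v) + ∑ i, (1 + k i) * Fv (Sum.inl i) := by
  rw [Fintype.sum_sum_type (esumF n k Fv), Fintype.sum_sum_type Fv]
  have h1 : ∑ i, esumF n k Fv (Sum.inl i)
      = (∑ i, Fv (Sum.inl i)) + ∑ i, Fv (Sum.inl (nxt i)) := by
    rw [← Finset.sum_add_distrib]
    rfl
  have h2 : ∑ i, Fv (Sum.inl (nxt i)) = ∑ i, Fv (Sum.inl i) := by
    apply Fintype.sum_bijective nxt
      ((Finite.injective_iff_bijective).1 (nxt_injective n))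
      (fun i => Fv (Sum.inl (nxt i))) (fun i => Fv (Sum.inl i))
    intro i; rfl
  have h3 : ∑ σ : Σ i : Fin n, Fin (k i), esumF n k Fv (Sum.inr σ)
      = (∑ σ : Σ i : Fin n, Fin (k i), Fv (Sum.inr σ)) + ∑ i, k i * Fv (Sum.inl i) := by
    calc ∑ σ : Σ i : Fin n, Fin (k i), esumF n k Fv (Sum.inr σ)
        = ∑ i : Fin n, ∑ j : Fin (k i), (Fv (Sum.inr ⟨i, j⟩) + Fv (Sum.inl i)) := by
          rw [← Finset.univ_sigma_univ, Finset.sum_sigma]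
          rfl
      _ = ∑ i : Fin n, ((∑ j : Fin (k i), Fv (Sum.inr ⟨i, j⟩)) + k i * Fv (Sum.inl i)) := by
          refine Finset.sum_congr rfl fun i _ => ?_
          rw [Finset.sum_add_distrib, Finset.sum_const, Finset.card_univ, Fintype.card_fin,
            smul_eq_mul]
      _ = (∑ i : Fin n, ∑ j : Fin (k i), Fv (Sum.inr ⟨i, j⟩)) + ∑ i, k i * Fv (Sum.inl i) :=
          Finset.sum_add_distrib
      _ = (∑ σ : Σ i : Fin n, Fin (k i), Fv (Sum.inr σ)) + ∑ i, k i * Fv (Sum.inl i) := by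
          rw [← Finset.univ_sigma_univ, Finset.sum_sigma]
  have h4 : ∀ i : Fin n, (1 + k i) * Fv (Sum.inl i)
      = Fv (Sum.inl i) + k i * Fv (Sum.inl i) := fun i => by ring
  rw [h1, h2, h3, Finset.sum_congr rfl (fun i _ => h4 i), Finset.sum_add_distrib]
  ring

lemma magic_eq (Fv : (Fin n ⊕ Σ i : Fin n, Fin (k i)) → ℕ) (Fe : _ → ℕ) (c : ℕ)
    (h : IsSEMT (pendantCycle n k) Fv Fe c) (hn : 3 ≤ n) :
    PP n k * c = (∑ x ∈ Finset.Icc (PP n k + 1) (PP n k + PP n k), x)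
      + ((∑ x ∈ Finset.Icc 1 (PP n k), x) + ∑ i, (1 + k i) * Fv (Sum.inl i)) := by
  obtain ⟨hfv, hfe, hmag⟩ := h
  rw [card_V] at hfv hfe
  rw [ncard_edgeSet n k hn] at hfe
  have hfe' : Set.BijOn (fun v => Fe (ee n k v)) Set.univ
      ↑(Finset.Icc (PP n k + 1) (PP n k + PP n k)) := by
    rw [Finset.coe_Icc]
    exact hfe.comp (ee_bijOn n k hn)
  have hfv' : Set.BijOn Fv Set.univ ↑(Finset.Icc 1 (PP n k)) := by
    rw [Finset.coe_Icc]; exact hfv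
  have hS1 : ∑ v, Fv v = ∑ x ∈ Finset.Icc 1 (PP n k), x := sum_univ_of_bijOn hfv'
  have hS2 : ∑ v, (fun v => Fe (ee n k v)) v
      = ∑ x ∈ Finset.Icc (PP n k + 1) (PP n k + PP n k), x := sum_univ_of_bijOn hfe'
  have hmagv : ∀ v, esumF n k Fv v + Fe (ee n k v) = c := by
    intro v
    rcases v with i | ⟨i, j⟩
    · exact hmag (Sum.inl i) (Sum.inl (nxt i)) (adj_cyc n k hn i)
    · exact hmag (Sum.inr ⟨i, j⟩) (Sum.inl i) (adj_pend n k i j)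
  have hPc : ∑ v, (esumF n k Fv v + Fe (ee n k v)) = PP n k * c := by
    rw [Finset.sum_congr rfl (fun v _ => hmagv v), Finset.sum_const, Finset.card_univ,
      card_V, smul_eq_mul]
  rw [← hPc, Finset.sum_add_distrib, sum_esumF]
  dsimp only at hS2
  linarith

lemma range_succ_eq_insert (N : ℕ) : Finset.range (N + 1) = insert 0 (Finset.Icc 1 N) := by
  ext x
  simp only [Finset.mem_range, Finset.mem_insert, Finset.mem_Icc]
  omega

lemma gauss_Icc (N : ℕ) : 2 * ∑ x ∈ Finset.Icc 1 N, x = N * (N + 1) := by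
  have h1 : ∑ x ∈ Finset.range (N + 1), x = ∑ x ∈ Finset.Icc 1 N, x := by
    rw [range_succ_eq_insert, Finset.sum_insert (by simp), Nat.zero_add]
  have h2 := Finset.sum_range_id_mul_two (N + 1)
  simp only [Nat.add_sub_cancel] at h2
  ring_nf at h1 h2 ⊢
  linarith

lemma gauss_split (N : ℕ) :
    (∑ x ∈ Finset.Icc 1 N, x) + (∑ x ∈ Finset.Icc (N + 1) (N + N), x)
      = ∑ x ∈ Finset.Icc 1 (N + N), x := by
  rw [show (1:ℕ) = 0 + 1 from rfl, Finset.Icc_add_one_left_eq_Ioc, Nat.zero_add, Finset.Icc_add_one_left_eq_Ioc]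
  exact Finset.sum_Ioc_consecutive _ (by omega) (by omega)

lemma gauss_fin (N : ℕ) : 2 * ∑ i : Fin N, (i.val + 1) = N * (N + 1) := by
  have h1 : ∑ i : Fin N, (i.val + 1) = (∑ i ∈ Finset.range N, i) + N := by
    rw [Fin.sum_univ_eq_sum_range (fun j => j + 1) N, Finset.sum_add_distrib,
      Finset.sum_const, Finset.card_range, smul_eq_mul, mul_one]
  rcases Nat.eq_zero_or_pos N with rfl | hN
  · simp
  · obtain ⟨M, rfl⟩ : ∃ M, N = M + 1 := ⟨N - 1, by omega⟩
    rw [h1]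
    have h2 := Finset.sum_range_id_mul_two (M + 1)
    simp only [Nat.add_sub_cancel] at h2
    ring_nf at h2 ⊢
    linarith

lemma sum_m_eq_sum_k (m : Fin n → ℕ)
    (hperm : Finset.univ.val.map m = Finset.univ.val.map k) :
    ∑ i, m i = ∑ i, k i := by
  have := congrArg Multiset.sum hperm
  simpa [Finset.sum] using this

lemma lower_bound_nat (m : Fin n → ℕ)
    (hanti : ∀ i j : Fin n, i ≤ j → m j ≤ m i)
    (hperm : Finset.univ.val.map m = Finset.univ.val.map k)
    (Fv : (Fin n ⊕ Σ i : Fin n, Fin (k i)) → ℕ) (Fe : _ → ℕ) (c : ℕ)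
    (h : IsSEMT (pendantCycle n k) Fv Fe c) (hn : 3 ≤ n) :
    4 * (PP n k * PP n k) + 4 * PP n k + 2 * (∑ i, i.val * m i) + n * (n - 1)
      ≤ 2 * (PP n k * c) := by
  have hmagic := magic_eq n k Fv Fe c h hn
  have hg1 := gauss_Icc (PP n k)
  have hg2 := gauss_Icc (PP n k + PP n k)
  have hg3 := gauss_split (PP n k)
  -- rearrangement inequality
  have hfv := h.1
  rw [card_V] at hfv
  have hinj : Function.Injective (fun i : Fin n => Fv (Sum.inl i)) := by
    intro i i' hii
    have := hfv.injOn (Set.mem_univ (Sum.inl i)) (Set.mem_univ (Sum.inl i')) hii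
    exact Fin.ext (congrArg (Sum.elim Fin.val (fun _ => 0)) this)
  have hpos : ∀ i : Fin n, 1 ≤ Fv (Sum.inl i) := fun i =>
    (hfv.mapsTo (Set.mem_univ (Sum.inl i))).1
  have hmult : Finset.univ.val.map (fun i => 1 + m i)
      = Finset.univ.val.map (fun i => 1 + k i) := by
    have := congrArg (Multiset.map (fun x => 1 + x)) hperm
    simpa [Multiset.map_map, Function.comp_def] using this
  have hkey := key_ineq (fun i => 1 + k i) (fun i => 1 + m i) hmult
    (fun i j hij => by have := hanti i j hij; omega)
    (fun i => Fv (Sum.inl i)) hinj hpos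
  -- expand the lower Dlow
  have hexp : ∀ i : Fin n, (1 + m i) * (i.val + 1)
      = (i.val + 1) + (i.val * m i + m i) := fun i => by ring
  have hDlow : ∑ i, (1 + m i) * (i.val + 1)
      = (∑ i : Fin n, (i.val + 1)) + ((∑ i, i.val * m i) + ∑ i, m i) := by
    rw [Finset.sum_congr rfl (fun i _ => hexp i), Finset.sum_add_distrib,
      Finset.sum_add_distrib, Finset.sum_add_distrib]
  have hgf := gauss_fin n
  have hsum_m := sum_m_eq_sum_k n k m hperm
  have hPP := PP_eq n k
  obtain ⟨M, rfl⟩ : ∃ M, n = M + 1 := ⟨n - 1, by omega⟩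
  simp only [Nat.add_sub_cancel]
  nlinarith [hkey, hmagic, hDlow, hg1, hg2, hg3, hgf, hsum_m, hPP]

end SEMTaux

/-- Lower bound for the strength of `G(n; k₁,…,kₙ)`: if `m₁ ≥ m₂ ≥ ⋯ ≥ mₙ` is the multiset
`{k₁,…,kₙ}` sorted in nonincreasing order (here `m i` is `m_{i+1}`), then
`sm(G) ≥ 2q + 2 + (1/q)(m₂ + 2m₃ + ⋯ + (n-1)mₙ + n(n-1)/2)` where `q = n + Σ kᵢ`. -/
theorem stmt_7 (n : ℕ) (hn : 3 ≤ n) (ho : Odd n) (k m : Fin n → ℕ)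
    (hanti : ∀ i j : Fin n, i ≤ j → m j ≤ m i)
    (hperm : Finset.univ.val.map m = Finset.univ.val.map k) :
    2 * ((n : ℚ) + ∑ i, (k i : ℚ)) + 2 +
        (1 / ((n : ℚ) + ∑ i, (k i : ℚ))) *
          ((∑ i : Fin n, (i.val : ℚ) * (m i : ℚ)) + (n : ℚ) * ((n : ℚ) - 1) / 2) ≤
      ((sInf {c | ∃ fv fe, IsSEMT (pendantCycle n k) fv fe c} : ℕ) : ℚ) := by
  have ho2 : n % 2 = 1 := Nat.odd_iff.1 ho
  have hne : {c | ∃ fv fe, IsSEMT (pendantCycle n k) fv fe c}.Nonempty :=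
    ⟨SEMTaux.CC n k, SEMTaux.fv n k, SEMTaux.fe n k, SEMTaux.exists_semt n k hn ho2⟩
  obtain ⟨Fv, Fe, hSEMT⟩ := Nat.sInf_mem hne
  set c := sInf {c | ∃ fv fe, IsSEMT (pendantCycle n k) fv fe c} with hc
  have hnat := SEMTaux.lower_bound_nat n k m hanti hperm Fv Fe c hSEMT hn
  set N := SEMTaux.PP n k with hN
  have hPP := SEMTaux.PP_eq n k
  have hQ : ((n : ℚ) + ∑ i, (k i : ℚ)) = (N : ℚ) := by
    rw [hN, hPP]; push_cast; ring
  have hNpos : (0:ℚ) < (N : ℚ) := by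
    have := SEMTaux.PP_pos n k hn
    exact_mod_cast this
  rw [hQ]
  set T : ℚ := ∑ i : Fin n, (i.val : ℚ) * (m i : ℚ) with hT
  have hkey : 4*(N:ℚ)*N + 4*N + 2*T + (n:ℚ)*((n:ℚ)-1) ≤ 2*(N:ℚ)*(c:ℚ) := by
    have h1 : ((4 * (N * N) + 4 * N + 2 * (∑ i, i.val * m i) + n * (n - 1) : ℕ) : ℚ)
        ≤ ((2 * (N * c) : ℕ) : ℚ) := by exact_mod_cast hnat
    push_cast [Nat.cast_sub (show 1 ≤ n by omega)] at h1
    rw [hT]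
    push_cast
    linarith
  have heq : 2*(N:ℚ) + 2 + 1/(N:ℚ) * (T + (n:ℚ)*((n:ℚ)-1)/2)
      = (4*(N:ℚ)*N + 4*N + 2*T + (n:ℚ)*((n:ℚ)-1))/(2*N) := by
    field_simp
    ring
  rw [heq, div_le_iff₀ (by positivity)]
  linarith
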